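/- Let k ≥ 2 be an integer and let H be a connected graph of order n containing a clique C on n − k vertices. If some two vertices of V(H) \ C are adjacent in H, then H has a spanning k-ended-tree (a spanning tree with at most k leaves). -/

import Mathlib

open Finset
open scoped Classical

/-- The adjacency matrix of a simple graph over ℝ. -/
noncomputable def adjMat {V : Type*} [Fintype V] (G : SimpleGraph V) :
    Matrix V V ℝ := fun i j => if G.Adj i j then 1 else 0

/-- The spectral radius of a graph: the largest (real) eigenvalue of its
adjacency matrix. -/
noncomputable def specRad {V : Type*} [Fintype V] (G : SimpleGraph V) : ℝ :=
  sSup {μ : ℝ | Module.End.HasEigenvalue (Matrix.mulVecLin (adjMat G)) μ}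

/-- The signless Laplacian matrix `Q = D + A` of a simple graph. -/
noncomputable def qMat {V : Type*} [Fintype V] (G : SimpleGraph V) :
    Matrix V V ℝ := fun i j =>
  (if i = j then ((univ.filter fun u => G.Adj i u).card : ℝ) else 0) +
    (if G.Adj i j then 1 else 0)

/-- The signless Laplacian spectral radius of a graph: the largest (real)
eigenvalue of `Q = D + A`. -/
noncomputable def qRad {V : Type*} [Fintype V] (G : SimpleGraph V) : ℝ :=
  sSup {μ : ℝ | Module.End.HasEigenvalue (Matrix.mulVecLin (qMat G)) μ}

/-- `G` has a spanning `k`-ended-tree: a spanning tree with at most `k`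
leaves (vertices of degree 1 in the tree). -/
noncomputable def HasSpanningKEndedTree {V : Type*} [Fintype V]
    (G : SimpleGraph V) (k : ℕ) : Prop :=
  ∃ T : SimpleGraph V, T ≤ G ∧ T.IsTree ∧
    (univ.filter fun v => T.degree v = 1).card ≤ k

/-- `G` has a spanning tree with leaf degree at most `k`: every vertex of the
tree is adjacent (in the tree) to at most `k` leaves of the tree. -/
noncomputable def HasSpanningTreeLeafDegLE {V : Type*} [Fintype V]
    (G : SimpleGraph V) (k : ℕ) : Prop :=
  ∃ T : SimpleGraph V, T ≤ G ∧ T.IsTree ∧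
    ∀ v, (univ.filter fun u => T.Adj v u ∧ T.degree u = 1).card ≤ k

/-- The graph `K₁ ∨ (K_{n-k-1} + kK₁)` on `n` vertices: vertex `0` is joined to
everything, vertices `0, …, n-k-1` form a clique `K_{n-k}`, and the last `k`
vertices are only adjacent to vertex `0`. -/
def oneJoinCliquePlusIso (n k : ℕ) : SimpleGraph (Fin n) :=
  SimpleGraph.fromRel fun i j => i.val = 0 ∨ (i.val < n - k ∧ j.val < n - k)

namespace PGAux
open SimpleGraph



variable {V : Type*} (r : V) (p : V → V)

/-- graph from a parent map -/
def pg : SimpleGraph V where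
  Adj x y := x ≠ y ∧ ((p x = y ∧ x ≠ r) ∨ (p y = x ∧ y ≠ r))
  symm := ⟨fun x y ⟨h1, h2⟩ => ⟨h1.symm, h2.symm⟩⟩
  loopless := ⟨fun x h => h.1 rfl⟩

variable {r p} {rank : V → ℕ}

lemma pg_adj_iff {x y : V} :
    (pg r p).Adj x y ↔ x ≠ y ∧ ((p x = y ∧ x ≠ r) ∨ (p y = x ∧ y ≠ r)) := Iff.rfl

variable (hrank : ∀ x, x ≠ r → rank (p x) < rank x)
include hrank

lemma pnex {x : V} (hx : x ≠ r) : p x ≠ x := by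
  intro e
  have := hrank x hx
  rw [e] at this
  omega

lemma adj_parent {x : V} (hx : x ≠ r) : (pg r p).Adj x (p x) :=
  ⟨Ne.symm (pnex hrank hx), Or.inl ⟨rfl, hx⟩⟩

lemma pg_le {H : SimpleGraph V} (hadj : ∀ x, x ≠ r → H.Adj x (p x)) : pg r p ≤ H := by
  intro x y hxy
  rcases hxy.2 with ⟨h1, h2⟩ | ⟨h1, h2⟩
  · exact h1 ▸ hadj x h2
  · exact (h1 ▸ hadj y h2).symm

lemma pg_reach (x : V) : (pg r p).Reachable x r := by
  have key : ∀ m (x : V), rank x ≤ m → (pg r p).Reachable x r := by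
    intro m
    induction m with
    | zero =>
      intro x hx
      by_cases h : x = r
      · subst h; exact Reachable.refl x
      · exact absurd (hrank x h) (by omega)
    | succ m ih =>
      intro x hx
      by_cases h : x = r
      · subst h; exact Reachable.refl x
      · exact ((adj_parent hrank h).reachable).trans
          (ih (p x) (by have := hrank x h; omega))
  exact key (rank x) x le_rfl

lemma pg_connected [Nonempty V] : (pg r p).Connected := by
  rw [connected_iff]
  exact ⟨fun x y => (pg_reach hrank x).trans (pg_reach hrank y).symm, inferInstance⟩

lemma pg_acyclic : (pg r p).IsAcyclic := by
  intro a c hc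
  obtain ⟨x, hx, hmax⟩ := Finset.exists_max_image c.support.toFinset rank
    ⟨a, by simp [c.start_mem_support]⟩
  rw [List.mem_toFinset] at hx
  have hmax' : ∀ y ∈ c.support, rank y ≤ rank x := fun y hy =>
    hmax y (List.mem_toFinset.2 hy)
  obtain ⟨c', hc', hsupp⟩ : ∃ c' : (pg r p).Walk x x, c'.IsCycle ∧
      ∀ y ∈ c'.support.tail, rank y ≤ rank x := by
    refine ⟨c.rotate x hx, hc.rotate hx, fun y hy => hmax' y ?_⟩
    exact List.mem_of_mem_tail (((Walk.support_rotate c x hx)).mem_iff.mp hy)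
  clear hmax hmax' hc hx c
  cases c' with
  | nil => exact hc'.not_of_nil
  | @cons _ s _ h q =>
    rw [Walk.cons_isCycle_iff] at hc'
    obtain ⟨hq_path, hq_edge⟩ := hc'
    have hxs : x ≠ s := (pg_adj_iff.mp h).1
    have hstail : ∀ y ∈ q.support, rank y ≤ rank x := by
      intro y hy
      apply hsupp
      simpa [Walk.support_cons] using hy
    -- last edge of q
    have hnn : ¬ q.reverse.Nil := by
      rw [Walk.not_nil_iff_lt_length, Walk.length_reverse]
      rcases Nat.eq_zero_or_pos q.length with h0 | h0
      · exact absurd (Walk.eq_of_length_eq_zero h0) (Ne.symm hxs)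
      · exact h0
    obtain ⟨t, h2, q2, hrev⟩ := Walk.not_nil_iff.mp hnn
    have hedge : s(x, t) ∈ q.edges := by
      have : s(x, t) ∈ q.reverse.edges := by rw [hrev]; simp
      rwa [Walk.edges_reverse, List.mem_reverse] at this
    have hts : t ≠ s := by
      rintro rfl
      exact hq_edge hedge
    have htsupp : t ∈ q.support := Walk.snd_mem_support_of_mem_edges q hedge
    have hranks : rank s ≤ rank x := hstail s q.start_mem_support
    have hrankt : rank t ≤ rank x := hstail t htsupp
    have hs_eq : s = p x := by
      rcases (pg_adj_iff.mp h).2 with ⟨h1, _⟩ | ⟨h1, hsr⟩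
      · exact h1.symm
      · have := hrank s hsr
        rw [h1] at this
        omega
    have ht_eq : t = p x := by
      rcases (pg_adj_iff.mp h2).2 with ⟨h1, _⟩ | ⟨h1, htr⟩
      · exact h1.symm
      · have := hrank t htr
        rw [h1] at this
        omega
    exact hts (ht_eq.trans hs_eq.symm)

lemma pg_two_le_degree [Fintype V] {x y : V} (hx : x ≠ r) (hy : p y = x)
    (hyr : y ≠ r) (hyx : y ≠ x) : 2 ≤ (pg r p).degree x := by
  have h1 : p x ∈ (pg r p).neighborFinset x :=
    (mem_neighborFinset _ _ _).2 (adj_parent hrank hx)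
  have h2 : y ∈ (pg r p).neighborFinset x :=
    (mem_neighborFinset _ _ _).2 ⟨Ne.symm hyx, Or.inr ⟨hy, hyr⟩⟩
  have hne : p x ≠ y := by
    intro e
    have e1 := hrank x hx
    have e2 := hrank y hyr
    rw [e] at e1
    rw [hy] at e2
    omega
  calc 2 = ({p x, y} : Finset V).card := (Finset.card_pair hne).symm
    _ ≤ ((pg r p).neighborFinset x).card := Finset.card_le_card (by
        intro z hz
        rcases Finset.mem_insert.mp hz with rfl | hz
        · exact h1
        · rwa [Finset.mem_singleton.mp hz])
    _ = (pg r p).degree x := rfl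

lemma pg_two_le_degree_root [Fintype V] {y z : V} (hy : p y = r) (hz : p z = r)
    (hyr : y ≠ r) (hzr : z ≠ r) (hyz : y ≠ z) : 2 ≤ (pg r p).degree r := by
  have h1 : y ∈ (pg r p).neighborFinset r :=
    (mem_neighborFinset _ _ _).2 ⟨Ne.symm hyr, Or.inr ⟨hy, hyr⟩⟩
  have h2 : z ∈ (pg r p).neighborFinset r :=
    (mem_neighborFinset _ _ _).2 ⟨Ne.symm hzr, Or.inr ⟨hz, hzr⟩⟩
  calc 2 = ({y, z} : Finset V).card := (Finset.card_pair hyz).symm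
    _ ≤ ((pg r p).neighborFinset r).card := Finset.card_le_card (by
        intro w hw
        rcases Finset.mem_insert.mp hw with rfl | hw
        · exact h1
        · rwa [Finset.mem_singleton.mp hw])
    _ = (pg r p).degree r := rfl


variable {n : ℕ}

end PGAux
namespace PGAux
open SimpleGraph

variable {n : ℕ}

/-- distance from a vertex to a nonempty set -/
noncomputable def Fd (H : SimpleGraph (Fin n)) (C : Finset (Fin n)) (hC : C.Nonempty)
    (x : Fin n) : ℕ := (C.image fun c => H.dist x c).min' (hC.image _)

variable {H : SimpleGraph (Fin n)} {C : Finset (Fin n)} {hC : C.Nonempty}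

lemma Fd_le {x c : Fin n} (hc : c ∈ C) : Fd H C hC x ≤ H.dist x c :=
  Finset.min'_le _ _ (Finset.mem_image_of_mem _ hc)

lemma Fd_exists (x : Fin n) : ∃ c ∈ C, Fd H C hC x = H.dist x c := by
  have := Finset.min'_mem (C.image fun c => H.dist x c) (hC.image _)
  rw [Finset.mem_image] at this
  obtain ⟨c, hc, e⟩ := this
  exact ⟨c, hc, e.symm⟩

lemma Fd_zero {x : Fin n} (hx : x ∈ C) : Fd H C hC x = 0 :=
  Nat.le_antisymm (by simpa [SimpleGraph.dist_self] using Fd_le (H := H) (hC := hC) (x := x) hx) (Nat.zero_le _)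

lemma Fd_mem (hH : H.Connected) {x : Fin n} (hx : Fd H C hC x = 0) : x ∈ C := by
  obtain ⟨c, hc, e⟩ := Fd_exists (H := H) (hC := hC) x
  rw [hx] at e
  rwa [(hH.dist_eq_zero_iff).mp e.symm]

lemma Fd_pos (hH : H.Connected) {x : Fin n} (hx : x ∉ C) : 1 ≤ Fd H C hC x := by
  rcases Nat.eq_zero_or_pos (Fd H C hC x) with h | h
  · exact absurd (Fd_mem hH h) hx
  · exact h

lemma Fd_step (hH : H.Connected) {x : Fin n} (hx : x ∉ C) :
    ∃ y, H.Adj x y ∧ Fd H C hC y + 1 = Fd H C hC x := by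
  obtain ⟨c, hc, hdc⟩ := Fd_exists (H := H) (hC := hC) x
  have hxc : x ≠ c := fun e => hx (e ▸ hc)
  have hpos : 0 < H.dist x c := hH.pos_dist_of_ne hxc
  obtain ⟨W, hW⟩ := hH.exists_walk_length_eq_dist x c
  cases W with
  | nil => rw [← hW] at hpos; simp at hpos
  | @cons _ y _ hadj W' =>
    refine ⟨y, hadj, ?_⟩
    have h1 : H.dist y c ≤ W'.length := SimpleGraph.dist_le W'
    have h2 : W'.length + 1 = H.dist x c := by
      rw [← hW]; simp [SimpleGraph.Walk.length_cons]
    have h3 : Fd H C hC y ≤ H.dist y c := Fd_le hc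
    have h4 : Fd H C hC x ≤ Fd H C hC y + 1 := by
      obtain ⟨c', hc', e'⟩ := Fd_exists (H := H) (hC := hC) y
      have t1 : H.dist x c' ≤ H.dist x y + H.dist y c' := hH.dist_triangle
      have t2 : H.dist x y ≤ 1 := by
        simpa using SimpleGraph.dist_le (SimpleGraph.Walk.cons hadj SimpleGraph.Walk.nil)
      have t3 : Fd H C hC x ≤ H.dist x c' := Fd_le hc'
      omega
    omega


lemma helper {n k : ℕ} (hk : 2 ≤ k) (H : SimpleGraph (Fin n)) (hH : H.Connected)
    (C : Finset (Fin n)) (hC : H.IsClique ↑C) (hcard : C.card = n - k)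
    (hCne : C.Nonempty)
    (u v : Fin n) (hu : u ∉ C) (hv : v ∉ C) (huv : H.Adj u v)
    (hF : Fd H C hCne u ≤ Fd H C hCne v) : HasSpanningKEndedTree H k := by
  classical
  set F := Fd H C hCne with hFdef
  have huvne : u ≠ v := huv.ne
  have step : ∀ x, x ∉ C → ∃ y, H.Adj x y ∧ F y + 1 = F x := fun x hx =>
    Fd_step (H := H) (hC := hCne) hH hx
  choose q hq1 hq2 using step
  have Fzero : ∀ x, x ∈ C → F x = 0 := fun x hx => Fd_zero (H := H) (hC := hCne) hx
  have Fmem : ∀ x, F x = 0 → x ∈ C := fun x hx => Fd_mem (H := H) (hC := hCne) hH hx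
  have Fpos : ∀ x, x ∉ C → 1 ≤ F x := fun x hx => Fd_pos (H := H) (hC := hCne) hH hx
  -- the vertex w of D \ {v} with minimal F-value, and its clique neighbor cs
  obtain ⟨w, hw, hwmin⟩ := Finset.exists_min_image
    (univ.filter fun x => x ∉ C ∧ x ≠ v) F ⟨u, by simp [hu, huvne]⟩
  rw [Finset.mem_filter] at hw
  obtain ⟨-, hwC, hwv⟩ := hw
  have hwu : F w ≤ F u := hwmin u (by simp [hu, huvne])
  have hFw : F w = 1 := by
    by_contra hne
    have h1 := Fpos w hwC
    have hy2 := hq2 w hwC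
    have hyC : q w hwC ∉ C := by
      intro hyc
      rw [Fzero _ hyc] at hy2
      omega
    have hyv : q w hwC ≠ v := by
      rintro e
      rw [e] at hy2
      omega
    have := hwmin (q w hwC) (by simp [hyC, hyv])
    omega
  have hcsC : q w hwC ∈ C := by
    apply Fmem
    have := hq2 w hwC
    omega
  set cs := q w hwC with hcsdef
  set S := C.erase cs with hSdef
  have hvcs : v ≠ cs := fun e => hv (e ▸ hcsC)
  have hucs : u ≠ cs := fun e => hu (e ▸ hcsC)
  have hwcs : w ≠ cs := fun e => hwC (e ▸ hcsC)
  -- parent map and rank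
  set p : Fin n → Fin n := fun x =>
    if x = v then u
    else if hx : x ∉ C then q x hx
    else if h2 : (S.filter fun z => x < z).Nonempty then (S.filter fun z => x < z).min' h2
    else cs with hpdef
  set rank : Fin n → ℕ := fun x =>
    if x = v then n + 3 + 2 * F v
    else if x ∈ C then (if x = cs then 0 else 1 + (n - x.val))
    else n + 2 + 2 * F x with hrankdef
  -- rank values
  have rank_v : rank v = n + 3 + 2 * F v := by simp [hrankdef]
  have rank_D : ∀ x, x ∉ C → x ≠ v → rank x = n + 2 + 2 * F x := by
    intro x h1 h2
    simp [hrankdef, h1, h2]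
  have rank_C : ∀ x, x ∈ C → x ≠ cs → rank x = 1 + (n - x.val) := by
    intro x h1 h2
    have : x ≠ v := fun e => hv (e ▸ h1)
    simp [hrankdef, h1, h2, this]
  have rank_cs : rank cs = 0 := by simp [hrankdef, hcsC, Ne.symm hvcs]
  -- parent values
  have p_v : p v = u := by simp [hpdef]
  have p_D : ∀ x (h1 : x ∉ C), x ≠ v → p x = q x h1 := by
    intro x h1 h2
    simp [hpdef, h1, h2]
  have p_w : p w = cs := by rw [p_D w hwC hwv]
  have p_C : ∀ x, x ∈ C → p x =
      (if h2 : (S.filter fun z => x < z).Nonempty then (S.filter fun z => x < z).min' h2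
       else cs) := by
    intro x h1
    have : x ≠ v := fun e => hv (e ▸ h1)
    simp [hpdef, h1, this]
  -- rank hypothesis
  have hrank : ∀ x, x ≠ cs → rank (p x) < rank x := by
    intro x hxr
    by_cases hxv : x = v
    · subst hxv
      rw [p_v, rank_v, rank_D u hu huvne]
      omega
    · by_cases hxC : x ∈ C
      · rw [rank_C x hxC hxr, p_C x hxC]
        split
        · next h2 =>
          have hmem := Finset.min'_mem _ h2
          rw [Finset.mem_filter] at hmem
          obtain ⟨hmemS, hlt⟩ := hmem
          have hyC : (S.filter fun z => x < z).min' h2 ∈ C := Finset.mem_of_mem_erase hmemS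
          have hycs : (S.filter fun z => x < z).min' h2 ≠ cs := Finset.ne_of_mem_erase hmemS
          rw [rank_C _ hyC hycs]
          have h3 : x.val < ((S.filter fun z => x < z).min' h2).val := hlt
          have h4 : ((S.filter fun z => x < z).min' h2).val < n :=
            ((S.filter fun z => x < z).min' h2).isLt
          omega
        · rw [rank_cs]; omega
      · rw [p_D x hxC hxv, rank_D x hxC hxv]
        have hy2 := hq2 x hxC
        by_cases hyv : q x hxC = v
        · rw [hyv, rank_v]
          rw [hyv] at hy2
          have := Fpos x hxC
          omega
        · by_cases hyC : q x hxC ∈ C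
          · by_cases hycs : q x hxC = cs
            · rw [hycs, rank_cs]; omega
            · rw [rank_C _ hyC hycs]
              have := (q x hxC).isLt
              omega
          · rw [rank_D _ hyC hyv]
            omega
  -- adjacency of parents
  have hadjp : ∀ x, x ≠ cs → H.Adj x (p x) := by
    intro x hxr
    by_cases hxv : x = v
    · subst hxv; rw [p_v]; exact huv.symm
    · by_cases hxC : x ∈ C
      · rw [p_C x hxC]
        split
        · next h2 =>
          have hmem := Finset.min'_mem _ h2
          rw [Finset.mem_filter] at hmem
          exact hC hxC (Finset.mem_of_mem_erase hmem.1) (ne_of_lt hmem.2)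
        · exact hC hxC hcsC hxr
      · rw [p_D x hxC hxv]
        exact hq1 x hxC
  -- the tree
  haveI : Nonempty (Fin n) := ⟨u⟩
  refine ⟨pg cs p, pg_le hrank hadjp, ⟨pg_connected hrank, pg_acyclic hrank⟩, ?_⟩
  -- leaf bound
  set c0 : Fin n := if h : S.Nonempty then S.min' h else cs with hc0def
  have key : ∀ x, (pg cs p).degree x = 1 → x ∈ insert c0 ((univ \ C).erase u) := by
    intro x hdeg
    by_contra hxB
    have hxc0 : x ≠ c0 := fun e => hxB (by rw [e]; exact Finset.mem_insert_self _ _)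
    have hrest : x = u ∨ x ∈ C := by
      by_contra hcon
      push_neg at hcon
      exact hxB (Finset.mem_insert.mpr (Or.inr (Finset.mem_erase.mpr
        ⟨hcon.1, by simp [hcon.2]⟩)))
    have h2deg : 2 ≤ (pg cs p).degree x := by
      rcases hrest with rfl | hxC
      · exact pg_two_le_degree hrank hucs p_v hvcs huvne.symm
      · by_cases hxcs : x = cs
        · subst hxcs
          have hSne : S.Nonempty := by
            by_contra hS
            rw [hc0def, dif_neg hS] at hxc0
            exact hxc0 rfl
          have hy : p (S.max' hSne) = cs := by
            rw [p_C _ (Finset.mem_of_mem_erase (S.max'_mem hSne))]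
            rw [dif_neg]
            rintro ⟨z, hz⟩
            rw [Finset.mem_filter] at hz
            exact absurd (S.le_max' z hz.1) (not_le.mpr hz.2)
          exact pg_two_le_degree_root hrank hy p_w
            (Finset.ne_of_mem_erase (S.max'_mem hSne)) hwcs
            (fun e => hwC (e ▸ Finset.mem_of_mem_erase (S.max'_mem hSne)))
        · have hxS : x ∈ S := Finset.mem_erase.mpr ⟨hxcs, hxC⟩
          have hSne : S.Nonempty := ⟨x, hxS⟩
          have hminx : S.min' hSne < x := by
            rcases lt_or_eq_of_le (S.min'_le x hxS) with h | h
            · exact h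
            · exfalso; apply hxc0; rw [hc0def, dif_pos hSne]; exact h.symm
          have hfne : (S.filter fun z => z < x).Nonempty :=
            ⟨S.min' hSne, Finset.mem_filter.mpr ⟨S.min'_mem hSne, hminx⟩⟩
          have hymem := Finset.max'_mem _ hfne
          rw [Finset.mem_filter] at hymem
          have hyC : (S.filter fun z => z < x).max' hfne ∈ C :=
            Finset.mem_of_mem_erase hymem.1
          have hycs : (S.filter fun z => z < x).max' hfne ≠ cs :=
            Finset.ne_of_mem_erase hymem.1
          have hpy : p ((S.filter fun z => z < x).max' hfne) = x := by
            rw [p_C _ hyC]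
            have hfne2 : (S.filter fun z => (S.filter fun z => z < x).max' hfne < z).Nonempty :=
              ⟨x, Finset.mem_filter.mpr ⟨hxS, hymem.2⟩⟩
            rw [dif_pos hfne2]
            apply le_antisymm
            · exact Finset.min'_le _ _ (Finset.mem_filter.mpr ⟨hxS, hymem.2⟩)
            · have hzmem := Finset.min'_mem _ hfne2
              rw [Finset.mem_filter] at hzmem
              by_contra hlt
              push_neg at hlt
              have : (S.filter fun z => (S.filter fun z => z < x).max' hfne < z).min' hfne2
                  ∈ S.filter fun z => z < x := Finset.mem_filter.mpr ⟨hzmem.1, hlt⟩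
              exact absurd (Finset.le_max' _ _ this) (not_le.mpr hzmem.2)
          exact pg_two_le_degree hrank hxcs hpy hycs (ne_of_lt hymem.2)
    omega
  -- cardinality
  have hsub : (univ.filter fun x => (pg cs p).degree x = 1) ⊆
      insert c0 ((univ \ C).erase u) := by
    intro x hx
    rw [Finset.mem_filter] at hx
    exact key x hx.2
  have hDcard : (univ \ C).card = k := by
    have h1 : (univ \ C).card = n - C.card := by
      rw [Finset.card_sdiff_of_subset (Finset.subset_univ C), Finset.card_univ, Fintype.card_fin]
    have h2 : 1 ≤ C.card := hCne.card_pos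
    have h3 : C.card ≤ n := by
      have := Finset.card_le_univ C
      simpa using this
    omega
  have hucard : u ∈ univ \ C := by simp [hu]
  calc (univ.filter fun x => (pg cs p).degree x = 1).card
      ≤ (insert c0 ((univ \ C).erase u)).card := Finset.card_le_card hsub
    _ ≤ ((univ \ C).erase u).card + 1 := Finset.card_insert_le _ _
    _ = ((univ \ C).card - 1) + 1 := by rw [Finset.card_erase_of_mem hucard]
    _ ≤ k := by omega


lemma helperA {n k : ℕ} (hnk : n ≤ k) (H : SimpleGraph (Fin n)) (hH : H.Connected)
    (u : Fin n) : HasSpanningKEndedTree H k := by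
  classical
  have step : ∀ x : Fin n, x ≠ u → ∃ y, H.Adj x y ∧ H.dist y u + 1 ≤ H.dist x u := by
    intro x hx
    have hpos : 0 < H.dist x u := hH.pos_dist_of_ne hx
    obtain ⟨W, hW⟩ := hH.exists_walk_length_eq_dist x u
    cases W with
    | nil => rw [← hW] at hpos; simp at hpos
    | @cons _ y _ hadj W' =>
      refine ⟨y, hadj, ?_⟩
      have h1 : H.dist y u ≤ W'.length := SimpleGraph.dist_le W'
      have h2 : W'.length + 1 = H.dist x u := by
        rw [← hW]; simp [SimpleGraph.Walk.length_cons]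
      omega
  choose q hq1 hq2 using step
  set p : Fin n → Fin n := fun x => if hx : x = u then x else q x hx with hpdef
  set rank : Fin n → ℕ := fun x => H.dist x u with hrankdef
  have p_D : ∀ x (hx : x ≠ u), p x = q x hx := by
    intro x hx
    simp [hpdef, hx]
  have hrank : ∀ x, x ≠ u → rank (p x) < rank x := by
    intro x hx
    rw [p_D x hx]
    have := hq2 x hx
    simp only [hrankdef]
    omega
  have hadjp : ∀ x, x ≠ u → H.Adj x (p x) := by
    intro x hx
    rw [p_D x hx]
    exact hq1 x hx
  haveI : Nonempty (Fin n) := ⟨u⟩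
  refine ⟨pg u p, pg_le hrank hadjp, ⟨pg_connected hrank, pg_acyclic hrank⟩, ?_⟩
  calc (univ.filter fun x => (pg u p).degree x = 1).card
      ≤ (univ : Finset (Fin n)).card := Finset.card_filter_le _ _
    _ = n := by simp
    _ ≤ k := hnk

end PGAux

/-- **Lemma.**  Let `k ≥ 2` and let `H` be a connected graph of order `n`
containing a clique `C` on `n - k` vertices.  If some two vertices outside `C`
are adjacent in `H`, then `H` has a spanning `k`-ended-tree. -/
theorem clique_plus_edge_spanning_k_ended_tree {n k : ℕ} (hk : 2 ≤ k)
    (H : SimpleGraph (Fin n)) (hH : H.Connected)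
    (C : Finset (Fin n)) (hC : H.IsClique ↑C) (hcard : C.card = n - k)
    (u v : Fin n) (hu : u ∉ C) (hv : v ∉ C) (huv : H.Adj u v) :
    HasSpanningKEndedTree H k := by
  by_cases hCne : C.Nonempty
  · rcases le_total (PGAux.Fd H C hCne u) (PGAux.Fd H C hCne v) with h | h
    · exact PGAux.helper hk H hH C hC hcard hCne u v hu hv huv h
    · exact PGAux.helper hk H hH C hC hcard hCne v u hv hu huv.symm h
  · have hC0 : C.card = 0 := by
      rw [Finset.card_eq_zero]
      exact Finset.not_nonempty_iff_eq_empty.1 hCne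
    have hnk : n ≤ k := by omega
    exact PGAux.helperA hnk H hH u
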